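/- arXiv:2404.02239 — 4 statements merged into one kernel-verified Lean document; each statement's English description precedes it below -/
import Mathlib

section
/- Let φ(t) = |t|^p for t ∈ ℝ with p ∈ [1,2], so that φ'(t) = p · sign(t) · |t|^(p-1). Then for all u, v ∈ ℝ, |φ'(u) - φ'(v)| ≤ p · 2^(2-p) · |u - v|^(p-1). -/
open Real

private lemma subadd {q : ℝ} (hq0 : 0 ≤ q) (hq1 : q ≤ 1) {a b : ℝ} (ha : 0 ≤ a) (hb : 0 ≤ b) :
    (a + b) ^ q ≤ a ^ q + b ^ q := by
  have h := NNReal.rpow_add_le_add_rpow (a.toNNReal) (b.toNNReal) hq0 hq1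
  have := NNReal.coe_le_coe.2 h
  push_cast at this
  rwa [Real.coe_toNNReal _ ha, Real.coe_toNNReal _ hb] at this

private lemma concadd {q : ℝ} (hq0 : 0 ≤ q) (hq1 : q ≤ 1) {a b : ℝ} (ha : 0 ≤ a) (hb : 0 ≤ b) :
    a ^ q + b ^ q ≤ 2 ^ (1 - q) * (a + b) ^ q := by
  have h := (Real.concaveOn_rpow hq0 hq1).2 (Set.mem_Ici.2 ha) (Set.mem_Ici.2 hb)
    (by norm_num : (0:ℝ) ≤ 1/2) (by norm_num : (0:ℝ) ≤ 1/2) (by norm_num)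
  simp only [smul_eq_mul] at h
  have h2 : (1/2 * a + 1/2 * b) = (a + b) / 2 := by ring
  rw [h2, Real.div_rpow (by positivity) (by norm_num)] at h
  have h3 : (2:ℝ) ^ (1 - q) = 2 / 2 ^ q := by
    rw [Real.rpow_sub (by norm_num), Real.rpow_one]
  rw [h3]
  have hq2 : (0:ℝ) < 2 ^ q := Real.rpow_pos_of_pos (by norm_num) q
  have h' : (a ^ q + b ^ q) / 2 ≤ (a + b) ^ q / 2 ^ q := by linarith
  rw [div_le_div_iff₀ (by norm_num) hq2] at h'
  rw [div_mul_eq_mul_div, le_div_iff₀ hq2]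
  linarith

private lemma key {q : ℝ} (hq0 : 0 ≤ q) (hq1 : q ≤ 1) (u v : ℝ) :
    |Real.sign u * |u| ^ q - Real.sign v * |v| ^ q| ≤ 2 ^ (1 - q) * |u - v| ^ q := by
  have h2 : (1:ℝ) ≤ 2 ^ (1 - q) := by
    have := Real.rpow_le_rpow_of_exponent_le (by norm_num : (1:ℝ) ≤ 2)
      (show (0:ℝ) ≤ 1 - q by linarith)
    rwa [Real.rpow_zero] at this
  have nonneg : ∀ a b : ℝ, 0 ≤ b → b ≤ a →
      |Real.sign a * |a| ^ q - Real.sign b * |b| ^ q| ≤ 2 ^ (1 - q) * |a - b| ^ q := by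
    intro a b hb hba
    have ha : 0 ≤ a := hb.trans hba
    rcases eq_or_lt_of_le hb with rfl | hb'
    · rcases eq_or_lt_of_le ha with rfl | ha'
      · simp [Real.sign_zero]
        positivity
      · rw [Real.sign_zero, Real.sign_of_pos ha', one_mul, zero_mul,
          sub_zero, sub_zero, abs_of_pos ha', abs_of_nonneg (Real.rpow_nonneg ha'.le q)]
        nlinarith [Real.rpow_nonneg ha'.le q]
    · have ha' : 0 < a := lt_of_lt_of_le hb' hba
      have hmono : b ^ q ≤ a ^ q := Real.rpow_le_rpow hb hba hq0
      rw [Real.sign_of_pos ha', Real.sign_of_pos hb', one_mul, one_mul,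
        abs_of_pos ha', abs_of_pos hb', abs_of_nonneg (by linarith : (0:ℝ) ≤ a ^ q - b ^ q),
        abs_of_nonneg (by linarith : (0:ℝ) ≤ a - b)]
      have hsub : a ^ q - b ^ q ≤ (a - b) ^ q := by
        have := subadd hq0 hq1 (show (0:ℝ) ≤ a - b by linarith) hb
        rw [sub_add_cancel] at this
        linarith
      have hrn : (0:ℝ) ≤ (a - b) ^ q := Real.rpow_nonneg (by linarith) q
      nlinarith
  have mixed : ∀ a b : ℝ, b < 0 → 0 < a →
      |Real.sign a * |a| ^ q - Real.sign b * |b| ^ q| ≤ 2 ^ (1 - q) * |a - b| ^ q := by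
    intro a b hb ha
    have h1 : (0:ℝ) ≤ a ^ q := Real.rpow_nonneg ha.le q
    have h2' : (0:ℝ) ≤ (-b) ^ q := Real.rpow_nonneg (by linarith : (0:ℝ) ≤ -b) q
    rw [Real.sign_of_pos ha, Real.sign_of_neg hb, abs_of_pos ha, abs_of_neg hb,
      one_mul, neg_one_mul, sub_neg_eq_add,
      abs_of_nonneg (by linarith : (0:ℝ) ≤ a ^ q + (-b) ^ q),
      abs_of_nonneg (by linarith : (0:ℝ) ≤ a - b)]
    have := concadd hq0 hq1 ha.le (show (0:ℝ) ≤ -b by linarith)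
    have he : a + -b = a - b := by ring
    rwa [he] at this
  have negsym : ∀ a b : ℝ,
      |Real.sign a * |a| ^ q - Real.sign b * |b| ^ q| ≤ 2 ^ (1 - q) * |a - b| ^ q →
      |Real.sign (-a) * |-a| ^ q - Real.sign (-b) * |-b| ^ q| ≤
        2 ^ (1 - q) * |(-a) - (-b)| ^ q := by
    intro a b hab
    rw [Real.sign_neg, Real.sign_neg, abs_neg, abs_neg,
      show -a - -b = -(a - b) by ring, abs_neg]
    calc |-Real.sign a * |a| ^ q - -Real.sign b * |b| ^ q|
        = |Real.sign a * |a| ^ q - Real.sign b * |b| ^ q| := by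
          rw [show -Real.sign a * |a| ^ q - -Real.sign b * |b| ^ q
            = -(Real.sign a * |a| ^ q - Real.sign b * |b| ^ q) by ring, abs_neg]
      _ ≤ _ := hab
  have symm : ∀ a b : ℝ,
      |Real.sign a * |a| ^ q - Real.sign b * |b| ^ q| ≤ 2 ^ (1 - q) * |a - b| ^ q →
      |Real.sign b * |b| ^ q - Real.sign a * |a| ^ q| ≤ 2 ^ (1 - q) * |b - a| ^ q := by
    intro a b hab
    rwa [abs_sub_comm, abs_sub_comm b a]
  have negcase : u ≤ 0 → v ≤ 0 →
      |Real.sign u * |u| ^ q - Real.sign v * |v| ^ q| ≤ 2 ^ (1 - q) * |u - v| ^ q := by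
    intro hu hv
    have h' : |Real.sign (-u) * |-u| ^ q - Real.sign (-v) * |-v| ^ q| ≤
        2 ^ (1 - q) * |(-u) - (-v)| ^ q := by
      rcases le_total (-v) (-u) with h | h
      · exact nonneg (-u) (-v) (by linarith) h
      · exact symm (-v) (-u) (nonneg (-v) (-u) (by linarith) h)
    have := negsym (-u) (-v) h'
    simpa using this
  rcases le_or_gt 0 u with hu | hu <;> rcases le_or_gt 0 v with hv | hv
  · rcases le_total v u with h | h
    · exact nonneg u v hv h
    · exact symm v u (nonneg v u hu h)
  · rcases eq_or_lt_of_le hu with heq | hu'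
    · exact negcase (le_of_eq heq.symm) hv.le
    · exact mixed u v hv hu'
  · rcases eq_or_lt_of_le hv with heq | hv'
    · exact negcase hu.le (le_of_eq heq.symm)
    · exact symm v u (mixed v u hu hv')
  · exact negcase hu.le hv.le

theorem lp_derivative_holder
    (p : ℝ) (hp : p ∈ Set.Icc (1:ℝ) 2) (u v : ℝ) :
    |p * Real.sign u * |u| ^ (p - 1) - p * Real.sign v * |v| ^ (p - 1)| ≤
      p * 2 ^ (2 - p) * |u - v| ^ (p - 1) := by
  obtain ⟨hp1, hp2⟩ := hp
  have hp0 : 0 < p := by linarith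
  have h := key (q := p - 1) (by linarith) (by linarith) u v
  have e : ∀ t : ℝ, p * Real.sign t * |t| ^ (p-1) = p * (Real.sign t * |t| ^ (p-1)) := by
    intro t; ring
  rw [e, e, ← mul_sub, abs_mul, abs_of_pos hp0]
  have h21 : (1:ℝ) - (p - 1) = 2 - p := by ring
  rw [h21] at h
  calc p * |Real.sign u * |u| ^ (p-1) - Real.sign v * |v| ^ (p-1)|
      ≤ p * (2 ^ (2 - p) * |u - v| ^ (p-1)) := mul_le_mul_of_nonneg_left h hp0.le
    _ = p * 2 ^ (2 - p) * |u - v| ^ (p-1) := by ring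
end

section
/- For all s ∈ (0,1) and t > 0, the Gamma function satisfies t^(1-s) ≤ Γ(t+1)/Γ(t+s) ≤ (t+s)^(1-s). -/
open Real

lemma gamma_log_convex_aux (x y a b : ℝ) (hx : 0 < x) (hy : 0 < y)
    (ha : 0 ≤ a) (hb : 0 ≤ b) (hab : a + b = 1) :
    Real.Gamma (a * x + b * y) ≤ Real.Gamma x ^ a * Real.Gamma y ^ b := by
  have hz : 0 < a * x + b * y := by
    rcases eq_or_lt_of_le ha with h | h
    · have hb1 : b = 1 := by linarith
      simpa [← h, hb1] using hy
    · nlinarith [mul_nonneg hb hy.le]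
  have h := Real.convexOn_log_Gamma.2 (Set.mem_Ioi.2 hx) (Set.mem_Ioi.2 hy) ha hb hab
  simp only [smul_eq_mul, Function.comp_apply] at h
  have hΓz : 0 < Real.Gamma (a * x + b * y) := Real.Gamma_pos_of_pos hz
  have hΓx : 0 < Real.Gamma x := Real.Gamma_pos_of_pos hx
  have hΓy : 0 < Real.Gamma y := Real.Gamma_pos_of_pos hy
  have hrhs : 0 < Real.Gamma x ^ a * Real.Gamma y ^ b := by positivity
  rw [← Real.log_le_log_iff hΓz hrhs]
  rw [Real.log_mul (by positivity) (by positivity), Real.log_rpow hΓx, Real.log_rpow hΓy]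
  exact h

theorem wendel_double_inequality
    (s t : ℝ) (hs : s ∈ Set.Ioo (0:ℝ) 1) (ht : 0 < t) :
    t ^ (1 - s) ≤ Real.Gamma (t + 1) / Real.Gamma (t + s) ∧
      Real.Gamma (t + 1) / Real.Gamma (t + s) ≤ (t + s) ^ (1 - s) := by
  obtain ⟨hs0, hs1⟩ := hs
  have hts : 0 < t + s := by linarith
  have hΓt : 0 < Real.Gamma t := Real.Gamma_pos_of_pos ht
  have hΓt1 : 0 < Real.Gamma (t + 1) := Real.Gamma_pos_of_pos (by linarith)
  have hΓts : 0 < Real.Gamma (t + s) := Real.Gamma_pos_of_pos hts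
  have hadd : Real.Gamma (t + 1) = t * Real.Gamma t := Real.Gamma_add_one ht.ne'
  have hadd2 : Real.Gamma (t + s + 1) = (t + s) * Real.Gamma (t + s) :=
    Real.Gamma_add_one hts.ne'
  constructor
  · -- Γ(t+s) ≤ Γ(t+1)^s * Γ(t)^(1-s)
    have h := gamma_log_convex_aux (t + 1) t s (1 - s) (by linarith) ht
      hs0.le (by linarith) (by ring)
    have hz : s * (t + 1) + (1 - s) * t = t + s := by ring
    rw [hz, hadd, mul_rpow ht.le hΓt.le] at h
    rw [hadd, le_div_iff₀ hΓts]
    calc t ^ (1 - s) * Real.Gamma (t + s)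
        ≤ t ^ (1 - s) * (t ^ s * Real.Gamma t ^ s * Real.Gamma t ^ (1 - s)) := by
          exact mul_le_mul_of_nonneg_left h (by positivity)
      _ = (t ^ (1 - s) * t ^ s) * (Real.Gamma t ^ s * Real.Gamma t ^ (1 - s)) := by ring
      _ = t * Real.Gamma t := by
          rw [← Real.rpow_add ht, ← Real.rpow_add hΓt]; norm_num
  · have h := gamma_log_convex_aux (t + s) (t + s + 1) s (1 - s) hts (by linarith)
      hs0.le (by linarith) (by ring)
    have hz : s * (t + s) + (1 - s) * (t + s + 1) = t + 1 := by ring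
    rw [hz, hadd2, mul_rpow hts.le hΓts.le] at h
    -- h : Γ(t+1) ≤ Γ(t+s)^s * ((t+s)^(1-s) * Γ(t+s)^(1-s))
    rw [div_le_iff₀ hΓts]
    calc Real.Gamma (t + 1) ≤ Real.Gamma (t+s) ^ s * ((t+s) ^ (1-s) * Real.Gamma (t+s) ^ (1-s)) := h
      _ = (t + s) ^ (1 - s) * (Real.Gamma (t+s) ^ s * Real.Gamma (t+s) ^ (1-s)) := by ring
      _ = (t + s) ^ (1 - s) * Real.Gamma (t + s) := by
          rw [← Real.rpow_add hΓts]; norm_num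
end

section
/- Let α ∈ [0,1], η > 0, a ≥ 0, and d ≥ 1. If 2a·(ηd)^((α+1)/2) ≤ 1, then ∫_{ℝ^d} exp(-‖x‖²/(2η) - a‖x‖^(α+1)) dx ≥ (2πη)^(d/2) / 2. -/
open MeasureTheory Real

set_option maxHeartbeats 1000000 in
theorem modified_gaussian_integral_lower_bound
    (α η a : ℝ) (d : ℕ) (hα : α ∈ Set.Icc (0:ℝ) 1) (hη : 0 < η) (ha : 0 ≤ a)
    (hd : 1 ≤ d) (hcond : 2 * a * (η * d) ^ ((α + 1) / 2) ≤ 1) :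
    (2 * Real.pi * η) ^ ((d : ℝ) / 2) / 2 ≤
      ∫ x : EuclideanSpace ℝ (Fin d),
        Real.exp (-‖x‖ ^ 2 / (2 * η) - a * ‖x‖ ^ (α + 1)) := by
  obtain ⟨hα0, hα1⟩ := hα
  set θ : ℝ := (α + 1) / 2 with hθdef
  have hθval : 2 * θ = α + 1 := by rw [hθdef]; ring
  have hθ0 : (0:ℝ) < θ := by rw [hθdef]; linarith
  have hθ1 : θ ≤ 1 := by rw [hθdef]; linarith
  clear_value θ
  have hdpos : (0:ℝ) < d := by exact_mod_cast hd
  have hηd : (0:ℝ) < η * d := by positivity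
  have hcond' : a * (η * d) ^ θ ≤ 1 / 2 := by linarith
  set b : ℝ := 1 / (2 * η) + a * θ * (η * d) ^ (θ - 1) with hbdef
  set c1 : ℝ := a * (1 - θ) * (η * d) ^ θ with hc1def
  clear_value b c1
  have hZnn : 0 ≤ a * θ * (η * d) ^ (θ - 1) := by positivity
  have hb : 0 < b := by
    have h2 : 0 < 1 / (2 * η) := by positivity
    linarith
  have hc1 : 0 ≤ c1 := by
    rw [hc1def]
    have : 0 ≤ 1 - θ := by linarith
    positivity
  -- pointwise bound
  have key : ∀ x : EuclideanSpace ℝ (Fin d),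
      Real.exp (-b * ‖x‖ ^ 2 - c1) ≤ Real.exp (-‖x‖ ^ 2 / (2 * η) - a * ‖x‖ ^ (α + 1)) := by
    intro x
    apply Real.exp_le_exp.2
    have hr : (0:ℝ) ≤ ‖x‖ := norm_nonneg x
    have hgm := Real.geom_mean_le_arith_mean2_weighted hθ0.le (by linarith : (0:ℝ) ≤ 1 - θ)
      (by positivity : (0:ℝ) ≤ ‖x‖ ^ 2 / (η * d)) zero_le_one (by ring)
    rw [Real.one_rpow, mul_one, mul_one] at hgm
    have hpow : ‖x‖ ^ (α + 1) = (‖x‖ ^ 2 / (η * d)) ^ θ * (η * d) ^ θ := by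
      rw [Real.div_rpow (by positivity) hηd.le, div_mul_cancel₀]
      · rw [← Real.rpow_natCast ‖x‖ 2, ← Real.rpow_mul hr]
        rw [show ((2:ℕ):ℝ) * θ = α + 1 by push_cast; linarith]
      · exact (Real.rpow_pos_of_pos hηd θ).ne'
    have hbound : a * ‖x‖ ^ (α + 1) ≤ a * θ * (η * d) ^ (θ - 1) * ‖x‖ ^ 2 + c1 := by
      rw [hpow, hc1def]
      have h1 : a * ((‖x‖ ^ 2 / (η * d)) ^ θ * (η * d) ^ θ)
          ≤ a * ((θ * (‖x‖ ^ 2 / (η * d)) + (1 - θ)) * (η * d) ^ θ) := by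
        apply mul_le_mul_of_nonneg_left _ ha
        exact mul_le_mul_of_nonneg_right hgm (Real.rpow_nonneg hηd.le θ)
      refine h1.trans (le_of_eq ?_)
      have hsub : (η * d) ^ (θ - 1) = (η * d) ^ θ / (η * d) := by
        rw [Real.rpow_sub hηd, Real.rpow_one]
      rw [hsub]
      field_simp
    have heq : -b * ‖x‖ ^ 2 - c1 = -‖x‖ ^ 2 / (2 * η)
        - (a * θ * (η * d) ^ (θ - 1) * ‖x‖ ^ 2 + c1) := by rw [hbdef]; ring
    rw [heq]
    linarith
  -- integrability of the integrand
  have hint_gauss : Integrable (fun x : EuclideanSpace ℝ (Fin d)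
      => Real.exp (-(1 / (2 * η)) * ‖x‖ ^ 2)) := by
    have h0 := (GaussianFourier.integrable_cexp_neg_mul_sq_norm_add
      (V := EuclideanSpace ℝ (Fin d))
      (b := (1 / (2 * η) : ℂ)) (by simp; positivity) 0 0).norm
    apply h0.congr
    filter_upwards with x
    simp only [zero_mul, add_zero, Complex.norm_exp]
    congr 1
    rw [show (-(1 / (2 * η) : ℂ) * (‖x‖:ℂ) ^ 2) = ((-(1 / (2 * η)) * ‖x‖ ^ 2 : ℝ) : ℂ) by
      push_cast; ring]
    rw [Complex.ofReal_re]
  have hcont : Continuous (fun x : EuclideanSpace ℝ (Fin d)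
      => Real.exp (-‖x‖ ^ 2 / (2 * η) - a * ‖x‖ ^ (α + 1))) := by
    apply Real.continuous_exp.comp
    apply Continuous.sub
    · exact ((continuous_norm.pow 2).neg).div_const _
    · exact continuous_const.mul
        (continuous_norm.rpow_const (fun x => Or.inr (by linarith)))
  have hint : Integrable (fun x : EuclideanSpace ℝ (Fin d)
      => Real.exp (-‖x‖ ^ 2 / (2 * η) - a * ‖x‖ ^ (α + 1))) := by
    apply hint_gauss.mono' hcont.aestronglyMeasurable
    filter_upwards with x
    rw [Real.norm_eq_abs, abs_of_nonneg (Real.exp_pos _).le]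
    apply Real.exp_le_exp.2
    have h1 : 0 ≤ a * ‖x‖ ^ (α + 1) := by positivity
    have h2 : -‖x‖ ^ 2 / (2 * η) = -(1 / (2 * η)) * ‖x‖ ^ 2 := by ring
    linarith [h2.ge, h2.le]
  -- lower bound via the Gaussian integral
  have hmono : ∫ x : EuclideanSpace ℝ (Fin d), Real.exp (-b * ‖x‖ ^ 2 - c1)
      ≤ ∫ x : EuclideanSpace ℝ (Fin d),
        Real.exp (-‖x‖ ^ 2 / (2 * η) - a * ‖x‖ ^ (α + 1)) := by
    apply integral_mono_of_nonneg _ hint (Filter.Eventually.of_forall key)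
    filter_upwards with x using (Real.exp_pos _).le
  have hgauss : ∫ x : EuclideanSpace ℝ (Fin d), Real.exp (-b * ‖x‖ ^ 2 - c1)
      = Real.exp (-c1) * (Real.pi / b) ^ ((d : ℝ) / 2) := by
    simp_rw [sub_eq_add_neg, Real.exp_add, mul_comm _ (Real.exp (-c1))]
    rw [integral_const_mul, GaussianFourier.integral_rexp_neg_mul_sq_norm hb]
    simp
  -- numeric estimate
  have hfin : (2 * Real.pi * η) ^ ((d : ℝ) / 2) / 2
      ≤ Real.exp (-c1) * (Real.pi / b) ^ ((d : ℝ) / 2) := by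
    have hπ : (0:ℝ) < Real.pi := Real.pi_pos
    have h2ηb : 2 * η * b ≤ 1 + θ / d := by
      have hsub : (η * d) ^ (θ - 1) = (η * d) ^ θ / (η * d) := by
        rw [Real.rpow_sub hηd, Real.rpow_one]
      have heq2 : 2 * η * (a * θ * (η * d) ^ (θ - 1)) = (2 * (a * (η * d) ^ θ)) * θ / d := by
        rw [hsub]; field_simp
      have hle : 2 * η * (a * θ * (η * d) ^ (θ - 1)) ≤ θ / d := by
        rw [heq2, div_le_div_iff₀ hdpos hdpos]
        nlinarith [mul_nonneg (mul_pos hθ0 hdpos).le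
          (by linarith : (0:ℝ) ≤ 1 - 2 * (a * (η * d) ^ θ))]
      have heq3 : 2 * η * b = 1 + 2 * η * (a * θ * (η * d) ^ (θ - 1)) := by
        rw [hbdef]; field_simp
      linarith
    have h2ηbpos : 0 < 2 * η * b := by positivity
    have hpow1 : (2 * η * b) ^ ((d : ℝ) / 2) ≤ Real.exp (θ / 2) := by
      have h1 : (2 * η * b) ^ ((d : ℝ) / 2) ≤ (Real.exp (θ / d)) ^ ((d : ℝ) / 2) := by
        apply Real.rpow_le_rpow h2ηbpos.le _ (by positivity)
        exact h2ηb.trans (by linarith [Real.add_one_le_exp (θ / d)])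
      have h2 : (Real.exp (θ / d)) ^ ((d : ℝ) / 2) = Real.exp (θ / 2) := by
        rw [← Real.exp_mul]
        congr 1
        field_simp
      linarith [h2.le, h2.ge]
    have hc1le : c1 ≤ (1 - θ) / 2 := by
      rw [hc1def]
      have h1 : a * (1 - θ) * (η * d) ^ θ = (1 - θ) * (a * (η * d) ^ θ) := by ring
      rw [h1]
      have h2 : (1 - θ) * (a * (η * d) ^ θ) ≤ (1 - θ) * (1 / 2) :=
        mul_le_mul_of_nonneg_left hcond' (by linarith)
      linarith
    have hprod : Real.exp c1 * (2 * η * b) ^ ((d : ℝ) / 2) ≤ 2 := by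
      have h1 : Real.exp c1 * (2 * η * b) ^ ((d : ℝ) / 2)
          ≤ Real.exp ((1 - θ) / 2) * Real.exp (θ / 2) :=
        mul_le_mul (Real.exp_le_exp.2 hc1le) hpow1 (by positivity) (Real.exp_pos _).le
      rw [← Real.exp_add] at h1
      have h2 : (1 - θ) / 2 + θ / 2 = 1 / 2 := by ring
      rw [h2] at h1
      have hsq : Real.exp (1/2 : ℝ) * Real.exp (1/2 : ℝ) = Real.exp 1 := by
        rw [← Real.exp_add]; norm_num
      have h3 : Real.exp (1 / 2 : ℝ) < 2 := by
        nlinarith [Real.exp_one_lt_d9, Real.exp_pos ((1:ℝ)/2)]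
      linarith
    have hZ : (0:ℝ) < (2 * Real.pi * η) ^ ((d : ℝ) / 2) := by positivity
    have hBpos : (0:ℝ) < (2 * η * b) ^ ((d : ℝ) / 2) := Real.rpow_pos_of_pos h2ηbpos _
    have hdiv : (Real.pi / b) ^ ((d : ℝ) / 2)
        = (2 * Real.pi * η) ^ ((d : ℝ) / 2) / (2 * η * b) ^ ((d : ℝ) / 2) := by
      rw [← Real.div_rpow (by positivity) h2ηbpos.le]
      congr 1
      field_simp
    have hrw : Real.exp (-c1) * ((2 * Real.pi * η) ^ ((d : ℝ) / 2)
        / (2 * η * b) ^ ((d : ℝ) / 2))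
        = (2 * Real.pi * η) ^ ((d : ℝ) / 2) / (Real.exp c1 * (2 * η * b) ^ ((d : ℝ) / 2)) := by
      rw [Real.exp_neg]
      field_simp
    rw [hdiv, hrw]
    gcongr
  calc (2 * Real.pi * η) ^ ((d : ℝ) / 2) / 2
      ≤ Real.exp (-c1) * (Real.pi / b) ^ ((d : ℝ) / 2) := hfin
    _ = ∫ x : EuclideanSpace ℝ (Fin d), Real.exp (-b * ‖x‖ ^ 2 - c1) := hgauss.symm
    _ ≤ _ := hmono
end

section
/- Let f : ℝ^d → ℝ be convex with gradient satisfying ‖f'(u) - f'(v)‖ ≤ L_α‖u - v‖^α, let η > 0, y ∈ ℝ^d, f_y^η(x) = f(x) + ‖x - y‖²/(2η), and let x* minimize f_y^η. Then for all x ∈ ℝ^d, f_y^η(x) ≤ f_y^η(x*) + ‖x - x*‖²/(2η) + (L_α/(α+1))‖x - x*‖^(α+1). -/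
open InnerProductSpace intervalIntegral MeasureTheory

local notation "⟪" x ", " y "⟫" => @inner ℝ _ _ x y

-- descent lemma
lemma descent_lemma
    (d : ℕ) (α Lα : ℝ) (hα : α ∈ Set.Icc (0:ℝ) 1) (hL : 0 < Lα)
    (f : EuclideanSpace ℝ (Fin d) → ℝ)
    (f' : EuclideanSpace ℝ (Fin d) → EuclideanSpace ℝ (Fin d))
    (hdiff : ∀ x, HasGradientAt f (f' x) x)
    (hHolder : ∀ u v, ‖f' u - f' v‖ ≤ Lα * ‖u - v‖ ^ α)
    (xstar x : EuclideanSpace ℝ (Fin d)) :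
    f x ≤ f xstar + ⟪f' xstar, x - xstar⟫ + Lα / (α + 1) * ‖x - xstar‖ ^ (α + 1) := by
  obtain ⟨hα0, hα1⟩ := hα
  set v := x - xstar with hv
  by_cases hv0 : v = 0
  · have : x = xstar := by rwa [hv, sub_eq_zero] at hv0
    subst this
    simp [hv0]
    positivity
  have hvn : (0:ℝ) < ‖v‖ := norm_pos_iff.2 hv0
  set g : ℝ → ℝ := fun t => f (xstar + t • v) with hg
  have hγ : ∀ t : ℝ, HasDerivAt (fun t : ℝ => xstar + t • v) v t := by
    intro t
    simpa using ((hasDerivAt_id t).smul_const v).const_add xstar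
  have hgd : ∀ t : ℝ, HasDerivAt g ⟪f' (xstar + t • v), v⟫ t := by
    intro t
    have := ((hdiff (xstar + t • v)).hasFDerivAt).comp_hasDerivAt t (hγ t)
    simpa [g, Function.comp_def, InnerProductSpace.toDual_apply_apply] using this
  -- integrability
  have hmeas : Measurable (fun t : ℝ => ⟪f' (xstar + t • v), v⟫) := by
    have : (fun t : ℝ => ⟪f' (xstar + t • v), v⟫) = deriv g := by
      ext t; exact ((hgd t).deriv).symm
    rw [this]; exact measurable_deriv g
  have hbd : ∀ t ∈ Set.uIcc (0:ℝ) 1, ‖⟪f' (xstar + t • v), v⟫‖ ≤ (‖f' xstar‖ + Lα * ‖v‖ ^ α) * ‖v‖ := by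
    intro t ht
    rw [Set.uIcc_of_le (by norm_num : (0:ℝ) ≤ 1)] at ht
    have h1 : ‖f' (xstar + t • v)‖ ≤ ‖f' xstar‖ + Lα * ‖v‖ ^ α := by
      have h2 := hHolder (xstar + t • v) xstar
      have h3 : ‖(xstar + t • v) - xstar‖ = t * ‖v‖ := by
        rw [add_sub_cancel_left, norm_smul, Real.norm_eq_abs, abs_of_nonneg ht.1]
      have h4 : (t * ‖v‖) ^ α ≤ ‖v‖ ^ α := by
        apply Real.rpow_le_rpow (mul_nonneg ht.1 (norm_nonneg v)) _ hα0
        nlinarith [ht.2, hvn]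
      calc ‖f' (xstar + t • v)‖ ≤ ‖f' xstar‖ + ‖f' (xstar + t • v) - f' xstar‖ := by
            have := norm_sub_norm_le (f' (xstar + t • v)) (f' xstar); linarith [abs_le.1 (abs_norm_sub_norm_le (f' (xstar + t • v)) (f' xstar))]
        _ ≤ ‖f' xstar‖ + Lα * ‖v‖ ^ α := by
            rw [h3] at h2
            nlinarith [h2, h4]
    calc ‖⟪f' (xstar + t • v), v⟫‖ ≤ ‖f' (xstar + t • v)‖ * ‖v‖ := by
          simpa using abs_real_inner_le_norm (f' (xstar + t • v)) v
      _ ≤ (‖f' xstar‖ + Lα * ‖v‖ ^ α) * ‖v‖ := by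
          apply mul_le_mul_of_nonneg_right h1 (norm_nonneg v)
  have hint : IntervalIntegrable (fun t : ℝ => ⟪f' (xstar + t • v), v⟫) volume 0 1 := by
    apply IntervalIntegrable.mono_fun' (g := fun _ => (‖f' xstar‖ + Lα * ‖v‖ ^ α) * ‖v‖)
      intervalIntegrable_const
      hmeas.aestronglyMeasurable.restrict
    filter_upwards [MeasureTheory.ae_restrict_mem measurableSet_uIoc] with t ht
    exact hbd t (Set.uIoc_subset_uIcc ht)
  have hFTC : f x - f xstar = ∫ t in (0:ℝ)..1, ⟪f' (xstar + t • v), v⟫ := by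
    have := intervalIntegral.integral_eq_sub_of_hasDerivAt (f := g)
      (fun t _ => hgd t) hint
    rw [this]
    simp [g, hv]
  -- bound the integral
  have hrint : IntervalIntegrable (fun t : ℝ => Lα * t ^ α * ‖v‖ ^ (α+1)) volume 0 1 := by
    apply IntervalIntegrable.mul_const
    apply IntervalIntegrable.const_mul
    exact intervalIntegral.intervalIntegrable_rpow' (by linarith)
  have hptw : ∀ t ∈ Set.Icc (0:ℝ) 1,
      ⟪f' (xstar + t • v), v⟫ ≤ ⟪f' xstar, v⟫ + Lα * t ^ α * ‖v‖ ^ (α+1) := by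
    intro t ht
    have h2 := hHolder (xstar + t • v) xstar
    have h3 : ‖(xstar + t • v) - xstar‖ = t * ‖v‖ := by
      rw [add_sub_cancel_left, norm_smul, Real.norm_eq_abs, abs_of_nonneg ht.1]
    have key : ⟪f' (xstar + t • v) - f' xstar, v⟫ ≤ Lα * t ^ α * ‖v‖ ^ (α+1) := by
      calc ⟪f' (xstar + t • v) - f' xstar, v⟫ ≤ ‖f' (xstar + t • v) - f' xstar‖ * ‖v‖ :=
            real_inner_le_norm _ _
        _ ≤ (Lα * (t * ‖v‖) ^ α) * ‖v‖ := by
            rw [h3] at h2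
            apply mul_le_mul_of_nonneg_right h2 (norm_nonneg v)
        _ = Lα * t ^ α * ‖v‖ ^ (α+1) := by
            rw [Real.mul_rpow ht.1 (norm_nonneg v), Real.rpow_add_one (ne_of_gt hvn)]
            ring
    have : ⟪f' (xstar + t • v), v⟫ = ⟪f' xstar, v⟫ + ⟪f' (xstar + t • v) - f' xstar, v⟫ := by
      rw [inner_sub_left]; ring
    linarith [key, this.le, this.ge]
  have hmono : (∫ t in (0:ℝ)..1, ⟪f' (xstar + t • v), v⟫)
      ≤ ∫ t in (0:ℝ)..1, (⟪f' xstar, v⟫ + Lα * t ^ α * ‖v‖ ^ (α+1)) := by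
    apply intervalIntegral.integral_mono_on (by norm_num) hint
      (intervalIntegrable_const.add hrint)
    exact hptw
  have hval : (∫ t in (0:ℝ)..1, (⟪f' xstar, v⟫ + Lα * t ^ α * ‖v‖ ^ (α+1)))
      = ⟪f' xstar, v⟫ + Lα / (α+1) * ‖v‖ ^ (α+1) := by
    rw [intervalIntegral.integral_add intervalIntegrable_const hrint]
    simp only [intervalIntegral.integral_const, smul_eq_mul, sub_zero, one_mul]
    rw [intervalIntegral.integral_mul_const, intervalIntegral.integral_const_mul,
      integral_rpow (Or.inl (by linarith))]
    rw [Real.one_rpow, Real.zero_rpow (by linarith)]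
    ring
  rw [hval] at hmono
  linarith [hFTC, hmono]




lemma opt_cond
    (d : ℕ)
    (f : EuclideanSpace ℝ (Fin d) → ℝ)
    (f' : EuclideanSpace ℝ (Fin d) → EuclideanSpace ℝ (Fin d))
    (hdiff : ∀ x, HasGradientAt f (f' x) x)
    (η : ℝ) (hη : 0 < η) (y xstar : EuclideanSpace ℝ (Fin d))
    (hmin : ∀ x, f xstar + ‖xstar - y‖ ^ 2 / (2 * η) ≤ f x + ‖x - y‖ ^ 2 / (2 * η)) :
    ∀ w, ⟪f' xstar, w⟫ + ⟪xstar - y, w⟫ / η = 0 := by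
  intro w
  have h2 : HasFDerivAt (fun z : EuclideanSpace ℝ (Fin d) => z - y)
      (ContinuousLinearMap.id ℝ _) xstar := (hasFDerivAt_id xstar).sub_const y
  have h3 := h2.norm_sq
  have hF : HasFDerivAt (fun z => f z + ‖z - y‖ ^ 2 / (2 * η))
      ((toDual ℝ _ (f' xstar)) + (2 * η)⁻¹ • (2 • (innerSL ℝ (xstar - y)).comp (ContinuousLinearMap.id ℝ _))) xstar := by
    have := (hdiff xstar).hasFDerivAt.add (h3.const_mul ((2 * η)⁻¹))
    exact this.congr_of_eventuallyEq (Filter.Eventually.of_forall fun z => by simp only [Pi.add_apply]; ring)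
  have hloc : IsLocalMin (fun z => f z + ‖z - y‖ ^ 2 / (2 * η)) xstar :=
    Filter.Eventually.of_forall hmin
  have hzero := hloc.hasFDerivAt_eq_zero hF
  have := DFunLike.congr_fun hzero w
  simp only [ContinuousLinearMap.add_apply, ContinuousLinearMap.smul_apply,
    ContinuousLinearMap.comp_apply, ContinuousLinearMap.id_apply, innerSL_apply_apply,
    InnerProductSpace.toDual_apply_apply, ContinuousLinearMap.zero_apply, smul_eq_mul, nsmul_eq_mul, Nat.cast_ofNat] at this
  field_simp at this ⊢
  linarith [this]

theorem upper_envelope_bound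
    (d : ℕ) (α Lα : ℝ) (hα : α ∈ Set.Icc (0:ℝ) 1) (hL : 0 < Lα)
    (f : EuclideanSpace ℝ (Fin d) → ℝ) (hf : ConvexOn ℝ Set.univ f)
    (f' : EuclideanSpace ℝ (Fin d) → EuclideanSpace ℝ (Fin d))
    (hdiff : ∀ x, HasGradientAt f (f' x) x)
    (hHolder : ∀ u v, ‖f' u - f' v‖ ≤ Lα * ‖u - v‖ ^ α)
    (η : ℝ) (hη : 0 < η) (y xstar : EuclideanSpace ℝ (Fin d))
    (hmin : ∀ x, f xstar + ‖xstar - y‖ ^ 2 / (2 * η) ≤ f x + ‖x - y‖ ^ 2 / (2 * η)) :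
    ∀ x, f x + ‖x - y‖ ^ 2 / (2 * η) ≤
      (f xstar + ‖xstar - y‖ ^ 2 / (2 * η)) + ‖x - xstar‖ ^ 2 / (2 * η)
        + Lα / (α + 1) * ‖x - xstar‖ ^ (α + 1) := by
  intro x
  set v := x - xstar with hv
  have hdesc := descent_lemma d α Lα hα hL f f' hdiff hHolder xstar x
  have hopt := opt_cond d f f' hdiff η hη y xstar hmin v
  have hexp : ‖x - y‖ ^ 2 = ‖xstar - y‖ ^ 2 + 2 * ⟪xstar - y, v⟫ + ‖v‖ ^ 2 := by
    have h : x - y = (xstar - y) + v := by rw [hv]; abel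
    rw [h, norm_add_sq_real]
  have hsplit : (‖xstar - y‖ ^ 2 + 2 * ⟪xstar - y, v⟫ + ‖v‖ ^ 2) / (2 * η)
      = ‖xstar - y‖ ^ 2 / (2 * η) + ⟪xstar - y, v⟫ / η + ‖v‖ ^ 2 / (2 * η) := by
    field_simp
  rw [hexp, hsplit]
  linarith [hdesc, hopt]
end
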